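/- Let λ and X be real numbers with 0 < λ < 1 and X ≥ 0, let t ≥ 1 be a natural number, and let M : ℕ → ℝ be a sequence with M(1) = 0 such that for every natural number s with 1 ≤ s ≤ t, M(s+1) − M(s) ≤ 2/(λs) + X/(λ²s²). Then M(t+1) ≤ (2·(logb 2 t + 1) + 2·X)/λ², where logb 2 denotes the base-2 logarithm. -/

import Mathlib

lemma sum_inv_sq_le (n : ℕ) (hn : 1 ≤ n) :
    ∑ i ∈ Finset.range n, (((i : ℝ) + 1)^2)⁻¹ ≤ 2 - (n : ℝ)⁻¹ := by
  induction n, hn using Nat.le_induction with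
  | base => norm_num
  | succ n hn ih =>
    rw [Finset.sum_range_succ]
    have hn' : (0:ℝ) < n := by exact_mod_cast hn
    have key : (((n:ℝ)+1)^2)⁻¹ ≤ (n:ℝ)⁻¹ - ((n:ℝ)+1)⁻¹ := by
      have h2 : (n:ℝ)⁻¹ - ((n:ℝ)+1)⁻¹ = ((n:ℝ)*((n:ℝ)+1))⁻¹ := by
        field_simp
        ring
      rw [h2]
      exact inv_anti₀ (by positivity) (by nlinarith)
    push_cast
    linarith

theorem summed_upper_bound (lam X : ℝ) (hlam0 : 0 < lam) (hlam1 : lam < 1) (hX : 0 ≤ X)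
    (t : ℕ) (ht : 1 ≤ t) (M : ℕ → ℝ) (hM1 : M 1 = 0)
    (hstep : ∀ s : ℕ, 1 ≤ s → s ≤ t →
      M (s + 1) - M s ≤ 2/(lam * s) + X/(lam^2 * s^2)) :
    M (t + 1) ≤ (2 * (Real.logb 2 t + 1) + 2 * X)/lam^2 := by
  have hlam2 : (0:ℝ) < lam^2 := by positivity
  have htR : (1:ℝ) ≤ t := by exact_mod_cast ht
  -- telescoping
  have htel : M (t + 1) = ∑ i ∈ Finset.range t, (M (i + 1 + 1) - M (i + 1)) := by
    rw [Finset.sum_range_sub (fun i => M (i + 1)) t, hM1, sub_zero]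
  -- bound each step
  have hsum : M (t + 1) ≤
      (2/lam) * ∑ i ∈ Finset.range t, ((i:ℝ)+1)⁻¹
      + (X/lam^2) * ∑ i ∈ Finset.range t, (((i:ℝ)+1)^2)⁻¹ := by
    rw [htel, Finset.mul_sum, Finset.mul_sum, ← Finset.sum_add_distrib]
    apply Finset.sum_le_sum
    intro i hi
    have h1 : 1 ≤ i + 1 := Nat.le_add_left 1 i
    have h2 : i + 1 ≤ t := Nat.succ_le_of_lt (Finset.mem_range.mp hi)
    have := hstep (i + 1) h1 h2
    have hip : (0:ℝ) < (i:ℝ) + 1 := by positivity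
    calc M (i + 1 + 1) - M (i + 1) ≤ 2/(lam * (i+1:ℕ)) + X/(lam^2 * ((i+1:ℕ):ℝ)^2) := this
      _ = 2/lam * ((i:ℝ)+1)⁻¹ + X/lam^2 * (((i:ℝ)+1)^2)⁻¹ := by
          push_cast
          field_simp
  -- harmonic bound
  have hH : ∑ i ∈ Finset.range t, ((i:ℝ)+1)⁻¹ ≤ 1 + Real.log t := by
    have h := harmonic_le_one_add_log t
    have he : (harmonic t : ℝ) = ∑ i ∈ Finset.range t, ((i:ℝ)+1)⁻¹ := by
      rw [harmonic]
      push_cast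
      ring
    rw [he] at h
    exact h
  have hS : ∑ i ∈ Finset.range t, (((i:ℝ)+1)^2)⁻¹ ≤ 2 := by
    have := sum_inv_sq_le t ht
    have : (0:ℝ) < (t:ℝ)⁻¹ := by positivity
    linarith [sum_inv_sq_le t ht]
  have hHpos : (0:ℝ) ≤ ∑ i ∈ Finset.range t, ((i:ℝ)+1)⁻¹ := by positivity
  have hlog0 : 0 ≤ Real.log t := Real.log_nonneg htR
  have hlogb : Real.log t ≤ Real.logb 2 t := by
    rw [Real.logb, le_div_iff₀ (Real.log_pos one_lt_two)]
    nlinarith [Real.log_two_lt_d9, Real.log_two_gt_d9]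
  have hlamsq : lam^2 ≤ lam := by nlinarith
  have key1 : (2/lam) * ∑ i ∈ Finset.range t, ((i:ℝ)+1)⁻¹ ≤ 2*(Real.logb 2 t + 1)/lam^2 := by
    calc (2/lam) * ∑ i ∈ Finset.range t, ((i:ℝ)+1)⁻¹
        ≤ (2/lam) * (1 + Real.log t) := by
          apply mul_le_mul_of_nonneg_left hH (by positivity)
      _ ≤ (2/lam^2) * (1 + Real.logb 2 t) := by
          apply mul_le_mul (by
            apply div_le_div_of_nonneg_left (by norm_num) hlam2 hlamsq) (by linarith)
            (by linarith) (by positivity)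
      _ = 2*(Real.logb 2 t + 1)/lam^2 := by ring
  have key2 : (X/lam^2) * ∑ i ∈ Finset.range t, (((i:ℝ)+1)^2)⁻¹ ≤ 2*X/lam^2 := by
    calc (X/lam^2) * ∑ i ∈ Finset.range t, (((i:ℝ)+1)^2)⁻¹
        ≤ (X/lam^2) * 2 := mul_le_mul_of_nonneg_left hS (by positivity)
      _ = 2*X/lam^2 := by ring
  calc M (t + 1) ≤ _ := hsum
    _ ≤ 2*(Real.logb 2 t + 1)/lam^2 + 2*X/lam^2 := add_le_add key1 key2
    _ = (2 * (Real.logb 2 t + 1) + 2 * X)/lam^2 := by ring
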